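/- Let P be an n-dimensional simple polytope with m facets and let s(P) denote its Buchstaber number, defined combinatorially as the maximal s such that there exists a map λ from the facet set to Z^{m-s} so that for every vertex v = F_{i₁} ∩ ... ∩ F_{i_n}, the vectors λ(F_{i₁}),...,λ(F_{i_n}) extend to a basis of Z^{m-s}. Then s(P) ≥ ⌊m/(n+1)⌋. -/

import Mathlib

/-- A family of vectors is part of a basis if it can be extended to a basis. -/
def IsPartOfBasis (R : Type) [Semiring R] {M : Type} [AddCommMonoid M] [Module R M]
    {ι : Type} (v : ι → M) : Prop :=
  ∃ (κ : Type) (b : Module.Basis (ι ⊕ κ) R M), ∀ i, b (Sum.inl i) = v i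

/-- If each vector `v i` is a standard basis vector `e_{ρ i}` (with `ρ` injective)
plus an error term `w i` satisfying `w j (ρ i) • w i = 0` for all `i j`, then the
family `v` extends to a basis of `ℤ^d`. -/
theorem isPartOfBasis_of_rows {d : ℕ} {ι : Type} [Fintype ι]
    (v : ι → (Fin d → ℤ)) (ρ : ι → Fin d) (hρ : Function.Injective ρ)
    (w : ι → (Fin d → ℤ)) (hvw : ∀ i, v i = Pi.single (ρ i) 1 + w i)
    (hK : ∀ i j : ι, w j (ρ i) • w i = (0 : Fin d → ℤ)) :
    IsPartOfBasis ℤ v := by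
  classical
  set S : (Fin d → ℤ) →ₗ[ℤ] (Fin d → ℤ) :=
    ∑ i : ι, (LinearMap.proj (ρ i)).smulRight (w i) with hS
  have hSapp : ∀ x, S x = ∑ i : ι, x (ρ i) • w i := by
    intro x
    simp [hS, LinearMap.sum_apply, LinearMap.smulRight_apply]
  have hSS : ∀ x, S (S x) = 0 := by
    intro x
    rw [hSapp]
    have h1 : ∀ i ∈ Finset.univ, (S x) (ρ i) • w i = (0 : Fin d → ℤ) := by
      intro i _
      rw [hSapp, Finset.sum_apply, Finset.sum_smul]
      have h2 : ∀ j ∈ Finset.univ, (x (ρ j) • w j) (ρ i) • w i = (0 : Fin d → ℤ) := by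
        intro j _
        simp only [Pi.smul_apply, smul_eq_mul, mul_smul]
        rw [hK i j, smul_zero]
      rw [Finset.sum_congr rfl h2]
      simp
    rw [Finset.sum_congr rfl h1]
    simp
  have h1 : (LinearMap.id + S).comp (LinearMap.id - S) = LinearMap.id := by
    apply LinearMap.ext; intro x
    simp only [LinearMap.comp_apply, LinearMap.add_apply, LinearMap.sub_apply,
      LinearMap.id_apply, map_sub, hSS, sub_zero]
    abel
  have h2 : (LinearMap.id - S).comp (LinearMap.id + S) = LinearMap.id := by
    apply LinearMap.ext; intro x
    simp only [LinearMap.comp_apply, LinearMap.add_apply, LinearMap.sub_apply,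
      LinearMap.id_apply, map_add, hSS, add_zero]
    abel
  set φ : (Fin d → ℤ) ≃ₗ[ℤ] (Fin d → ℤ) :=
    LinearEquiv.ofLinear (LinearMap.id + S) (LinearMap.id - S) h1 h2 with hφ
  set b0 : Module.Basis (Fin d) ℤ (Fin d → ℤ) := (Pi.basisFun ℤ (Fin d)).map φ with hb0def
  have hb0 : ∀ i : ι, b0 (ρ i) = v i := by
    intro i
    have hstep : b0 (ρ i) = (Pi.single (ρ i) 1 : Fin d → ℤ)
        + S (Pi.single (ρ i) 1 : Fin d → ℤ) := by
      rw [hb0def, Module.Basis.map_apply, Pi.basisFun_apply, hφ, LinearEquiv.ofLinear_apply,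
        LinearMap.add_apply, LinearMap.id_apply]
    rw [hstep, hSapp ((Pi.single (ρ i) 1 : Fin d → ℤ))]
    have hsum : ∑ j : ι, (Pi.single (ρ i) (1:ℤ) : Fin d → ℤ) (ρ j) • w j = w i := by
      rw [Finset.sum_eq_single i]
      · simp
      · intro j _ hji
        rw [Pi.single_eq_of_ne (fun hh => hji (hρ hh)), zero_smul]
      · intro h; exact absurd (Finset.mem_univ i) h
    rw [hsum, hvw i]
  set e : (ι ⊕ ↥(Set.range ρ)ᶜ) ≃ Fin d :=
    (Equiv.sumCongr (Equiv.ofInjective ρ hρ) (Equiv.refl _)).trans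
      (Equiv.Set.sumCompl (Set.range ρ)) with he
  refine ⟨↥(Set.range ρ)ᶜ, b0.reindex e.symm, fun i => ?_⟩
  rw [Module.Basis.reindex_apply, Equiv.symm_symm, he]
  simp only [Equiv.trans_apply, Equiv.sumCongr_apply, Sum.map_inl,
    Equiv.Set.sumCompl_apply_inl, Equiv.ofInjective_apply]
  exact hb0 i

theorem buchstaber_ge_m_div_n_add_one (m n : ℕ) (hn : 0 < n) (hm : n < m)
    (verts : Finset (Finset (Fin m))) (hne : verts.Nonempty)
    (hcard : ∀ V ∈ verts, V.card = n) :
    m / (n + 1) ≤ sSup {s : ℕ | s ≤ m ∧ ∃ lam : Fin m → (Fin (m - s) → ℤ),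
      ∀ V ∈ verts, IsPartOfBasis ℤ (fun i : {x // x ∈ V} => lam i.1)} := by
  classical
  set a := m / (n + 1) with hadef
  have ha : 0 < a := Nat.div_pos (by omega) (by omega)
  have hma : a * (n + 1) ≤ m := Nat.div_mul_le_self m (n + 1)
  have han : n * a + a ≤ m := by nlinarith
  have had : n * a ≤ m - a := by omega
  set lam : Fin m → (Fin (m - a) → ℤ) := fun i r =>
    if (i : ℕ) < a then (if (r : ℕ) < n * a ∧ (r : ℕ) % a = (i : ℕ) then 1 else 0)
    else (if (r : ℕ) = (i : ℕ) - a then 1 else 0) with hlam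
  have key : a ∈ {s : ℕ | s ≤ m ∧ ∃ lam : Fin m → (Fin (m - s) → ℤ),
      ∀ V ∈ verts, IsPartOfBasis ℤ (fun i : {x // x ∈ V} => lam i.1)} := by
    refine ⟨by omega, lam, ?_⟩
    intro V hVmem
    have cn : V.card = n := hcard V hVmem
    -- choose rows
    have hrow : ∀ i : Fin m, (i : ℕ) < a → i ∈ V →
        ∃ r : ℕ, r < n ∧ ∀ j ∈ V, ¬ (j : ℕ) < a → r * a + (i : ℕ) ≠ (j : ℕ) - a := by
      intro i hia hiV
      set B : Finset ℕ := (V.filter (fun j : Fin m => ¬ ((j : ℕ) < a))).image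
        (fun j : Fin m => (j : ℕ) - a) with hB
      set T : Finset ℕ := (Finset.range n).image (fun r : ℕ => r * a + (i : ℕ)) with hT
      have hTcard : T.card = n := by
        rw [hT, Finset.card_image_of_injective, Finset.card_range]
        intro r1 r2 h
        simp only at h
        exact Nat.eq_of_mul_eq_mul_right ha (by omega)
      have hBcard : B.card < n := by
        have h1 : B.card ≤ (V.filter (fun j : Fin m => ¬ ((j : ℕ) < a))).card :=
          Finset.card_image_le
        have h2 : (V.filter (fun j : Fin m => (j : ℕ) < a)).card
            + (V.filter (fun j : Fin m => ¬ ((j : ℕ) < a))).card = n := by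
          rw [Finset.card_filter_add_card_filter_not, cn]
        have h3 : 0 < (V.filter (fun j : Fin m => (j : ℕ) < a)).card :=
          Finset.card_pos.2 ⟨i, Finset.mem_filter.2 ⟨hiV, hia⟩⟩
        omega
      have hex : ∃ x ∈ T, x ∉ B := by
        by_contra hc
        push_neg at hc
        exact absurd (Finset.card_le_card hc) (by omega)
      obtain ⟨x, hxT, hxB⟩ := hex
      rw [hT, Finset.mem_image] at hxT
      obtain ⟨r, hr, rfl⟩ := hxT
      refine ⟨r, Finset.mem_range.1 hr, ?_⟩
      intro j hjV hja hEq
      exact hxB (Finset.mem_image.2 ⟨j, Finset.mem_filter.2 ⟨hjV, hja⟩, hEq.symm⟩)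
    set rfn : Fin m → ℕ := fun i =>
      if h : (i : ℕ) < a ∧ i ∈ V then (hrow i h.1 h.2).choose else 0 with hrfn
    have hrspec : ∀ i : Fin m, (i : ℕ) < a → i ∈ V → rfn i < n ∧
        ∀ j ∈ V, ¬ (j : ℕ) < a → rfn i * a + (i : ℕ) ≠ (j : ℕ) - a := by
      intro i h1 h2
      have hsp := (hrow i h1 h2).choose_spec
      rw [hrfn]
      simp only [h1, h2, and_self, dif_pos]
      exact ⟨hsp.1, hsp.2⟩
    set pf : Fin m → ℕ := fun i =>
      if (i : ℕ) < a ∧ i ∈ V then rfn i * a + (i : ℕ) else (i : ℕ) - a with hpf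
    have hpfA : ∀ i : Fin m, (i : ℕ) < a → i ∈ V →
        pf i < n * a ∧ pf i % a = (i : ℕ) := by
      intro i h1 h2
      have hrn := (hrspec i h1 h2).1
      have heq : pf i = rfn i * a + (i : ℕ) := by rw [hpf]; simp [h1, h2]
      constructor
      · rw [heq]
        calc rfn i * a + (i : ℕ) < rfn i * a + a := by omega
          _ = (rfn i + 1) * a := by ring
          _ ≤ n * a := Nat.mul_le_mul_right a (by omega)
      · rw [heq, Nat.add_comm, Nat.add_mul_mod_self_right, Nat.mod_eq_of_lt h1]
    have hpfI : ∀ i : Fin m, ¬ (i : ℕ) < a → pf i = (i : ℕ) - a := by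
      intro i h1
      rw [hpf]; simp [h1]
    have hpfbound : ∀ i : Fin m, i ∈ V → pf i < m - a := by
      intro i hi
      by_cases h : (i : ℕ) < a
      · have := (hpfA i h hi).1; omega
      · have h1 := hpfI i h
        have h2 := i.isLt
        omega
    set ρ : {x // x ∈ V} → Fin (m - a) := fun i => ⟨pf i.1, hpfbound i.1 i.2⟩ with hρ
    have hρcoe : ∀ i : {x // x ∈ V}, ((ρ i : Fin (m - a)) : ℕ) = pf i.1 := fun i => rfl
    have hρinj : Function.Injective ρ := by
      intro i j hij
      have hij' : pf i.1 = pf j.1 := congrArg Fin.val hij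
      have : (i.1 : ℕ) = (j.1 : ℕ) := by
        by_cases hi : (i.1 : ℕ) < a <;> by_cases hj : (j.1 : ℕ) < a
        · have h1 := (hpfA i.1 hi i.2).2
          have h2 := (hpfA j.1 hj j.2).2
          rw [← h1, ← h2, hij']
        · exfalso
          have h1 : pf i.1 = rfn i.1 * a + (i.1 : ℕ) := by rw [hpf]; simp [hi, i.2]
          have h2 := hpfI j.1 hj
          exact (hrspec i.1 hi i.2).2 j.1 j.2 hj (by omega)
        · exfalso
          have h1 : pf j.1 = rfn j.1 * a + (j.1 : ℕ) := by rw [hpf]; simp [hj, j.2]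
          have h2 := hpfI i.1 hi
          exact (hrspec j.1 hj j.2).2 i.1 i.2 hi (by omega)
        · have h1 := hpfI i.1 hi
          have h2 := hpfI j.1 hj
          omega
      exact Subtype.ext (Fin.ext this)
    set w : {x // x ∈ V} → (Fin (m - a) → ℤ) :=
      fun k => lam k.1 - Pi.single (ρ k) 1 with hwdef
    have hvw : ∀ k : {x // x ∈ V}, lam k.1 = Pi.single (ρ k) 1 + w k := by
      intro k
      simp only [hwdef]
      abel
    have hwzero : ∀ i : {x // x ∈ V}, ¬ (i.1 : ℕ) < a → w i = 0 := by
      intro i hi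
      funext r
      have hpfi := hpfI i.1 hi
      simp only [hwdef, Pi.sub_apply, Pi.zero_apply, hlam]
      rw [if_neg hi]
      have hiff : (r = ρ i) ↔ ((r : ℕ) = (i.1 : ℕ) - a) := by
        rw [Fin.ext_iff, hρcoe, hpfi]
      by_cases h : (r : ℕ) = (i.1 : ℕ) - a
      · rw [if_pos h, Pi.single_apply, if_pos (hiff.2 h)]
        ring
      · rw [if_neg h, Pi.single_apply, if_neg (fun hh => h (hiff.1 hh))]
        ring
    apply isPartOfBasis_of_rows (fun k : {x // x ∈ V} => lam k.1) ρ hρinj w hvw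
    intro i j
    by_cases hi : (i.1 : ℕ) < a
    · suffices h : w j (ρ i) = 0 by rw [h, zero_smul]
      by_cases hj : (j.1 : ℕ) < a
      · have hpi := hpfA i.1 hi i.2
        simp only [hwdef, Pi.sub_apply, Pi.single_apply, hlam]
        rw [if_pos hj]
        by_cases hji : j = i
        · subst hji
          have hcond : ((ρ j : Fin (m - a)) : ℕ) < n * a ∧
              ((ρ j : Fin (m - a)) : ℕ) % a = (j.1 : ℕ) := ⟨hpi.1, hpi.2⟩
          rw [if_pos hcond, if_pos rfl]
          ring
        · have hcond : ¬ (((ρ i : Fin (m - a)) : ℕ) < n * a ∧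
              ((ρ i : Fin (m - a)) : ℕ) % a = (j.1 : ℕ)) := by
            rintro ⟨-, hmod⟩
            have hval : (i.1 : ℕ) = (j.1 : ℕ) := by rw [← hpi.2]; exact hmod
            exact hji (Subtype.ext (Fin.ext hval)).symm
          have hne : ρ i ≠ ρ j := fun hh => hji (hρinj hh).symm
          rw [if_neg hcond, if_neg hne]
          ring
      · rw [hwzero j hj]
        rfl
    · rw [hwzero i hi, smul_zero]
  have hbdd : BddAbove {s : ℕ | s ≤ m ∧ ∃ lam : Fin m → (Fin (m - s) → ℤ),
      ∀ V ∈ verts, IsPartOfBasis ℤ (fun i : {x // x ∈ V} => lam i.1)} :=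
    ⟨m, fun s hs => hs.1⟩
  exact le_csSup hbdd key
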